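/- For all x in [0,1], the binary entropy function h(x) = -x·ln(x) - (1-x)·ln(1-x) (with the convention 0·ln 0 = 0) satisfies h(x) ≤ 2·√(x(1-x)). -/

import Mathlib

open MeasureTheory Filter Finset
open scoped ENNReal

/-- `p` is a probability distribution on `Fin d`. -/
def IsProbDist {d : ℕ} (p : Fin d → ℝ) : Prop :=
  (∀ i, 0 ≤ p i) ∧ ∑ i, p i = 1

/-- Base-2 Kullback–Leibler divergence (real-valued version, meaningful when
`supp p ⊆ supp q`), with the convention `0 · log(0/q) = 0`. -/
noncomputable def klDivReal {d : ℕ} (p q : Fin d → ℝ) : ℝ :=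
  ∑ i, if p i = 0 then 0 else p i * Real.logb 2 (p i / q i)

/-- Base-2 Kullback–Leibler divergence, `+∞` when `supp p ⊄ supp q`. -/
noncomputable def klDiv {d : ℕ} (p q : Fin d → ℝ) : EReal :=
  if ∀ i, q i = 0 → p i = 0 then ((klDivReal p q : ℝ) : EReal) else ⊤

/-- Minimal nonzero entry of `p` (junk value `1` if there is none). -/
noncomputable def minPos {d : ℕ} (p : Fin d → ℝ) : ℝ :=
  if h : (Finset.univ.filter fun i => 0 < p i).Nonempty
  then (Finset.univ.filter fun i => 0 < p i).inf' h p else 1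

/-- The continuity modulus `g(p, ε) = 2 log₂(1/p_min) ε + (2√2/ln 2) √ε`. -/
noncomputable def gCont {d : ℕ} (p : Fin d → ℝ) (ε : ℝ) : ℝ :=
  2 * Real.logb 2 (1 / minPos p) * ε + (2 * Real.sqrt 2 / Real.log 2) * Real.sqrt ε

/-- The discrete measure on `Fin d` with mass `p i` at `i`. -/
noncomputable def discMeasure {d : ℕ} (p : Fin d → ℝ) : Measure (Fin d) :=
  Measure.count.withDensity fun i => ENNReal.ofReal (p i)

instance discMeasure.isFiniteMeasure {d : ℕ} (p : Fin d → ℝ) :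
    IsFiniteMeasure (discMeasure p) := by
  constructor
  rw [discMeasure, withDensity_apply _ MeasurableSet.univ,
    MeasureTheory.setLIntegral_univ, MeasureTheory.lintegral_count, tsum_fintype]
  exact ENNReal.sum_lt_top.mpr fun i _ => ENNReal.ofReal_lt_top

/-- The law of `n` i.i.d. samples from `p`. -/
noncomputable def iidMeasure {d : ℕ} (p : Fin d → ℝ) (n : ℕ) :
    Measure (Fin n → Fin d) :=
  Measure.pi fun _ => discMeasure p

/-- The empirical distribution of the sample `x`. -/
noncomputable def empDist {d n : ℕ} (x : Fin n → Fin d) : Fin d → ℝ :=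
  fun i => ((Finset.univ.filter fun j => x j = i).card : ℝ) / n

/-- ℓ¹ distance between two vectors on `Fin d`. -/
noncomputable def l1Dist {d : ℕ} (p q : Fin d → ℝ) : ℝ :=
  ∑ i, |p i - q i|

/-- binary entropy bound `h(x) ≤ 2√(x(1-x))` on `[0,1]`.
(`Real.log 0 = 0` in Mathlib, which encodes the convention `0 · ln 0 = 0`.) -/
lemma two_log_le {y : ℝ} (hy : 1 ≤ y) : 2 * Real.log y ≤ y - 1/y := by
  set f : ℝ → ℝ := fun y => y - 1/y - 2 * Real.log y with hf
  have key : MonotoneOn f (Set.Ici 1) := by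
    apply monotoneOn_of_deriv_nonneg (convex_Ici 1)
    · apply ContinuousOn.sub (ContinuousOn.sub continuousOn_id ?_) ?_
      · exact ContinuousOn.div continuousOn_const continuousOn_id
          (fun x hx => by simp at hx; positivity)
      · exact (continuousOn_const).mul (Real.continuousOn_log.mono
          (fun x hx => by simp at hx ⊢; positivity))
    · intro x hx
      rw [interior_Ici] at hx
      have hx0 : (0:ℝ) < x := lt_trans one_pos hx
      apply DifferentiableAt.differentiableWithinAt
      apply DifferentiableAt.sub
      apply DifferentiableAt.sub differentiableAt_fun_id
      · exact (differentiableAt_const _).div differentiableAt_fun_id hx0.ne'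
      · exact (differentiableAt_const _).mul (Real.differentiableAt_log hx0.ne')
    · intro x hx
      rw [interior_Ici] at hx
      have hx0 : (0:ℝ) < x := lt_trans one_pos hx
      have : deriv f x = 1 - (-(1 / x^2)) - 2 * (1/x) := by
        rw [hf]
        rw [deriv_fun_sub, deriv_fun_sub, deriv_id'', deriv_fun_div, deriv_const_mul, Real.deriv_log]
        · simp; ring
        · exact Real.differentiableAt_log hx0.ne'
        · exact differentiableAt_const _
        · exact differentiableAt_fun_id
        · exact hx0.ne'
        · exact differentiableAt_fun_id
        · exact (differentiableAt_const _).div differentiableAt_fun_id hx0.ne'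
        · exact DifferentiableAt.sub differentiableAt_fun_id
            ((differentiableAt_const _).div differentiableAt_fun_id hx0.ne')
        · exact (differentiableAt_const _).mul (Real.differentiableAt_log hx0.ne')
      rw [this]
      have h1 : 1 + 1/x^2 - 2*(1/x) = (1 - 1/x)^2 := by field_simp; ring
      nlinarith [sq_nonneg (1 - 1/x)]
  have h0 : f 1 ≤ f y := key (by simp) hy hy
  simp only [hf, Real.log_one] at h0
  rw [one_div] ; norm_num at h0 ⊢
  linarith

lemma neg_log_le {t : ℝ} (ht : 0 < t) (ht1 : t ≤ 1) :
    -Real.log t ≤ (1 - t) / Real.sqrt t := by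
  have hs : 0 < Real.sqrt t := Real.sqrt_pos.mpr ht
  have hy : 1 ≤ 1 / Real.sqrt t := by
    rw [le_div_iff₀ hs]
    simpa using Real.sqrt_le_one.mpr ht1
  have := two_log_le hy
  rw [Real.log_div one_ne_zero hs.ne', Real.log_one, Real.log_sqrt ht.le] at this
  have hst : Real.sqrt t * Real.sqrt t = t := Real.mul_self_sqrt ht.le
  have : -Real.log t ≤ 1 / Real.sqrt t - Real.sqrt t := by
    rw [one_div_one_div] at this; linarith
  calc -Real.log t ≤ 1 / Real.sqrt t - Real.sqrt t := this
    _ = (1 - t) / Real.sqrt t := by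
        rw [eq_div_iff hs.ne']; field_simp; rw [Real.sq_sqrt ht.le]

theorem binEntropy_le_two_sqrt :
    ∀ x ∈ Set.Icc (0 : ℝ) 1,
      -(x * Real.log x) - (1 - x) * Real.log (1 - x) ≤ 2 * Real.sqrt (x * (1 - x)) := by
  have main : ∀ t : ℝ, 0 ≤ t → t ≤ 1 → -(t * Real.log t) ≤ Real.sqrt (t * (1 - t)) := by
    intro t ht0 ht1
    rcases eq_or_lt_of_le ht0 with h0 | h0
    · simp [← h0, Real.sqrt_nonneg]
    have hs : 0 < Real.sqrt t := Real.sqrt_pos.mpr h0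
    have hst : Real.sqrt t * Real.sqrt t = t := Real.mul_self_sqrt ht0
    have h1 : -(t * Real.log t) ≤ t * ((1 - t) / Real.sqrt t) := by
      have := neg_log_le h0 ht1
      nlinarith
    have h2 : t * ((1 - t) / Real.sqrt t) = Real.sqrt t * (1 - t) := by
      field_simp; nlinarith
    have h3 : Real.sqrt (t * (1 - t)) = Real.sqrt t * Real.sqrt (1 - t) :=
      Real.sqrt_mul ht0 _
    have h4 : (1 - t) ≤ Real.sqrt (1 - t) := by
      have hu : Real.sqrt (1 - t) * Real.sqrt (1 - t) = 1 - t :=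
        Real.mul_self_sqrt (by linarith)
      have hu1 : Real.sqrt (1 - t) ≤ 1 := Real.sqrt_le_one.mpr (by linarith)
      nlinarith [Real.sqrt_nonneg (1 - t)]
    rw [h3]
    calc -(t * Real.log t) ≤ t * ((1 - t) / Real.sqrt t) := h1
      _ = Real.sqrt t * (1 - t) := h2
      _ ≤ Real.sqrt t * Real.sqrt (1 - t) := by
          exact mul_le_mul_of_nonneg_left h4 hs.le
  intro x hx
  obtain ⟨hx0, hx1⟩ := hx
  have A := main x hx0 hx1
  have B := main (1 - x) (by linarith) (by linarith)
  have : Real.sqrt ((1 - x) * (1 - (1 - x))) = Real.sqrt (x * (1 - x)) := by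
    ring_nf
  simp only [show (1 : ℝ) - (1 - x) = x by ring] at B
  rw [show (1 - x) * x = x * (1 - x) by ring] at B
  linarith
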